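/- All integer solutions of the equation x + x²*y - y*z² = 0 are exactly: (x, y, z) = (0, 0, w), (0, w, 0), (-1, 1, 0), and (1, -1, 0), where w is an arbitrary integer. -/

import Mathlib

theorem stmt_14 (x y z : ℤ) :
    x + x ^ 2 * y - y * z ^ 2 = 0 ↔
      (∃ w : ℤ, x = 0 ∧ y = 0 ∧ z = w) ∨
      (∃ w : ℤ, x = 0 ∧ y = w ∧ z = 0) ∨
      (x = -1 ∧ y = 1 ∧ z = 0) ∨
      (x = 1 ∧ y = -1 ∧ z = 0) := by
  constructor
  · intro h
    have hx : x = y * (z ^ 2 - x ^ 2) := by linarith [h, mul_sub y (z^2) (x^2)]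
    by_cases hx0 : x = 0
    · subst hx0
      have hyz : y * z ^ 2 = 0 := by linarith
      rcases mul_eq_zero.mp hyz with hy | hz
      · exact Or.inl ⟨z, rfl, hy, rfl⟩
      · have hz0 : z = 0 := by
          have := pow_eq_zero_iff (n := 2) (by norm_num) |>.mp hz
          exact this
        exact Or.inr (Or.inl ⟨y, rfl, rfl, hz0⟩)
    · have hy0 : y ≠ 0 := by rintro rfl; simp at hx; exact hx0 hx
      have hd0 : z ^ 2 - x ^ 2 ≠ 0 := by
        rintro hd; rw [hd, mul_zero] at hx; exact hx0 hx
      have habs : |z ^ 2 - x ^ 2| ≤ |x| := by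
        calc |z ^ 2 - x ^ 2| = 1 * |z ^ 2 - x ^ 2| := by ring
        _ ≤ |y| * |z ^ 2 - x ^ 2| := by
            apply mul_le_mul_of_nonneg_right _ (abs_nonneg _)
            exact Int.one_le_abs hy0
        _ = |x| := by rw [← abs_mul, ← hx]
      -- show |x| = 1
      have hx1 : x = 1 ∨ x = -1 := by
        by_contra hc
        push_neg at hc
        obtain ⟨hc1, hc2⟩ := hc
        have h2 : 2 ≤ |x| := by
          rcases abs_cases x with ⟨ha, _⟩ | ⟨ha, _⟩ <;> omega
        have hzx : z ^ 2 = x ^ 2 := by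
          rcases abs_le.mp habs with ⟨h1', h2'⟩
          rcases lt_trichotomy (z ^ 2) (x ^ 2) with hlt | heq | hgt
          · have hza : |z| ≤ |x| - 1 := by
              nlinarith [sq_abs z, sq_abs x, abs_nonneg z, abs_nonneg x, sq_nonneg (|z| - |x|)]
            nlinarith [sq_abs z, sq_abs x, abs_nonneg z]
          · exact heq
          · have hza : |x| + 1 ≤ |z| := by
              nlinarith [sq_abs z, sq_abs x, abs_nonneg z, abs_nonneg x]
            nlinarith [sq_abs z, sq_abs x, abs_nonneg z, abs_nonneg x]
        exact hd0 (by omega)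
      rcases hx1 with rfl | rfl
      · -- x = 1 : 1 = y * (z^2 - 1)
        have h1 : y * (z ^ 2 - 1) = 1 := by nlinarith [hx]
        have hy : y = 1 ∨ y = -1 :=
          Int.isUnit_iff.mp (IsUnit.of_mul_eq_one (z ^ 2 - 1) h1)
        rcases hy with rfl | rfl
        · exfalso
          have hz2 : z ^ 2 = 2 := by linarith
          have h3 : -1 ≤ z ∧ z ≤ 1 := by
            constructor <;> nlinarith [sq_nonneg (z + 1), sq_nonneg (z - 1)]
          obtain ⟨h3a, h3b⟩ := h3
          interval_cases z <;> norm_num at hz2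
        · have hz2 : z ^ 2 = 0 := by linarith
          have hz0 : z = 0 := by nlinarith [sq_nonneg z]
          exact Or.inr (Or.inr (Or.inr ⟨rfl, rfl, hz0⟩))
      · -- x = -1 : -1 = y * (z^2 - 1)
        have h1 : y * (z ^ 2 - 1) = -1 := by nlinarith [hx]
        have hy : y = 1 ∨ y = -1 := by
          have : (-y) * (z ^ 2 - 1) = 1 := by linarith [h1]
          rcases Int.isUnit_iff.mp (IsUnit.of_mul_eq_one (z ^ 2 - 1) this) with h | h <;> omega
        rcases hy with rfl | rfl
        · have hz2 : z ^ 2 = 0 := by linarith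
          have hz0 : z = 0 := by nlinarith [sq_nonneg z]
          exact Or.inr (Or.inr (Or.inl ⟨rfl, rfl, hz0⟩))
        · exfalso
          have hz2 : z ^ 2 = 2 := by linarith
          have h3 : -1 ≤ z ∧ z ≤ 1 := by
            constructor <;> nlinarith [sq_nonneg (z + 1), sq_nonneg (z - 1)]
          obtain ⟨h3a, h3b⟩ := h3
          interval_cases z <;> norm_num at hz2
  · rintro (⟨w, rfl, rfl, rfl⟩ | ⟨w, rfl, rfl, rfl⟩ | ⟨rfl, rfl, rfl⟩ | ⟨rfl, rfl, rfl⟩) <;> ring
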